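/- arXiv:1701.02768 — 8 statements merged into one kernel-verified Lean document; each statement's English description precedes it below -/
import Mathlib

section
/- For natural numbers n, c, d, the sum over k from 0 to n of C(n,k)^2·C(k,c)·C(n-k,d) equals C(2n-c-d, n)·C(n,c)·C(n,d). -/
theorem stmt_1 (n c d : ℕ) :
    ∑ k ∈ Finset.range (n + 1),
      (n.choose k) ^ 2 * k.choose c * (n - k).choose d =
    (2 * n - c - d).choose n * n.choose c * n.choose d := by
  by_cases hc : c ≤ n
  · by_cases hd : d ≤ n
    · by_cases hcd : c + d ≤ n
      · -- main case
        have hsub : Finset.Ico c (n + 1) ⊆ Finset.range (n + 1) := by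
          intro x hx
          simp only [Finset.mem_Ico, Finset.mem_range] at *
          omega
        rw [← Finset.sum_subset hsub (by
          intro x hx hx'
          simp only [Finset.mem_Ico, Finset.mem_range] at *
          have hxc : x < c := by omega
          rw [Nat.choose_eq_zero_of_lt hxc]
          ring)]
        rw [Finset.sum_Ico_eq_sum_range]
        have hrange : n + 1 - c = n - c + 1 := by omega
        rw [hrange]
        have hsub2 : Finset.range (n - c - d + 1) ⊆ Finset.range (n - c + 1) := by
          apply Finset.range_subset_range.2; omega
        rw [← Finset.sum_subset hsub2 (by
          intro j hj hj'
          simp only [Finset.mem_range] at *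
          have : n - (c + j) < d := by omega
          rw [Nat.choose_eq_zero_of_lt this]
          ring)]
        have key : ∀ j ∈ Finset.range (n - c - d + 1),
            (n.choose (c + j)) ^ 2 * (c + j).choose c * (n - (c + j)).choose d =
            n.choose c * n.choose d * ((n - c).choose j * (n - d).choose (n - c - d - j)) := by
          intro j hj
          simp only [Finset.mem_range] at hj
          have hkn : c + j ≤ n := by omega
          have hA : n.choose (c + j) * (c + j).choose c =
              n.choose c * (n - c).choose j := by
            rw [Nat.choose_mul (n := n) (Nat.le_add_right c j)]
            congr 1
            congr 1
            omega
          have hB : n.choose (c + j) * (n - (c + j)).choose d =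
              n.choose d * (n - d).choose (n - c - d - j) := by
            rw [← Nat.choose_symm hkn,
              Nat.choose_mul (n := n) (by omega : d ≤ n - (c + j))]
            congr 1
            congr 1
            omega
          calc (n.choose (c + j)) ^ 2 * (c + j).choose c * (n - (c + j)).choose d
              = (n.choose (c + j) * (c + j).choose c) *
                (n.choose (c + j) * (n - (c + j)).choose d) := by ring
            _ = (n.choose c * (n - c).choose j) *
                (n.choose d * (n - d).choose (n - c - d - j)) := by rw [hA, hB]
            _ = n.choose c * n.choose d *
                ((n - c).choose j * (n - d).choose (n - c - d - j)) := by ring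
        rw [Finset.sum_congr rfl key, ← Finset.mul_sum]
        have hvan : ∑ j ∈ Finset.range (n - c - d + 1),
            (n - c).choose j * (n - d).choose (n - c - d - j) =
            (2 * n - c - d).choose n := by
          have := Nat.add_choose_eq (n - c) (n - d) (n - c - d)
          rw [Finset.Nat.sum_antidiagonal_eq_sum_range_succ_mk] at this
          rw [← this]
          have h1 : n - c + (n - d) = 2 * n - c - d := by omega
          rw [h1]
          exact Nat.choose_symm_of_eq_add (by omega)
        rw [hvan]; ring
      · -- c + d > n : both sides zero
        rw [Nat.choose_eq_zero_of_lt (by omega : 2 * n - c - d < n)]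
        rw [Finset.sum_eq_zero, Nat.zero_mul, Nat.zero_mul]
        intro k hk
        simp only [Finset.mem_range] at hk
        by_cases hkc : k < c
        · rw [Nat.choose_eq_zero_of_lt hkc]; ring
        · rw [Nat.choose_eq_zero_of_lt (by omega : n - k < d)]; ring
    · rw [Nat.choose_eq_zero_of_lt (by omega : n < d), Nat.mul_zero]
      apply Finset.sum_eq_zero
      intro k hk
      simp only [Finset.mem_range] at hk
      rw [Nat.choose_eq_zero_of_lt (by omega : n - k < d)]; ring
  · rw [Nat.choose_eq_zero_of_lt (by omega : n < c)]
    rw [Finset.sum_eq_zero, Nat.mul_zero, Nat.zero_mul]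
    intro k hk
    simp only [Finset.mem_range] at hk
    rw [Nat.choose_eq_zero_of_lt (by omega : k < c)]; ring
end

section
/- For natural numbers a, b, m, c, d with m+a ≥ d, the sum over k from 0 to a of C(a,k)·C(b,m+k)·C(k,c)·C(m+k,d) equals C(a+b-c-d, m+a-d)·C(a,c)·C(b,d). -/
/-- Trinomial revision valid without `k ≤ n`. -/
lemma trinom (n k s : ℕ) (hsk : s ≤ k) :
    n.choose k * k.choose s = n.choose s * (n - s).choose (k - s) := by
  rcases le_or_gt k n with hkn | hkn
  · exact Nat.choose_mul hsk
  · rcases le_or_gt s n with hs | hs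
    · simp [Nat.choose_eq_zero_of_lt hkn,
        Nat.choose_eq_zero_of_lt (show n - s < k - s by omega)]
    · simp [Nat.choose_eq_zero_of_lt hkn, Nat.choose_eq_zero_of_lt hs]

theorem stmt_4 (a b m c d : ℕ) (h : m + a ≥ d) :
    ∑ k ∈ Finset.range (a + 1),
      a.choose k * b.choose (m + k) * k.choose c * (m + k).choose d =
    (a + b - c - d).choose (m + a - d) * a.choose c * b.choose d := by
  by_cases hca : c ≤ a
  swap
  · rw [Finset.sum_eq_zero, Nat.choose_eq_zero_of_lt (by omega : a < c)]
    · ring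
    · intro k hk
      simp only [Finset.mem_range] at hk
      rw [Nat.choose_eq_zero_of_lt (by omega : k < c)]
      ring
  by_cases hdb : d ≤ b
  swap
  · rw [Finset.sum_eq_zero, Nat.choose_eq_zero_of_lt (by omega : b < d)]
    · ring
    · intro k hk
      rcases le_or_gt (m + k) b with hmk | hmk
      · rw [Nat.choose_eq_zero_of_lt (by omega : m + k < d)]; ring
      · rw [Nat.choose_eq_zero_of_lt hmk]; ring
  set L := max c (d - m) with hL
  have hLa : L ≤ a := by omega
  -- restrict the sum to Ico L (a+1)
  rw [show Finset.range (a + 1) = Finset.range (a + 1) from rfl]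
  rw [← Finset.sum_subset
      (show Finset.Ico L (a + 1) ⊆ Finset.range (a + 1) by
        rw [Finset.range_eq_Ico]; exact Finset.Ico_subset_Ico (Nat.zero_le _) le_rfl)
      (by
        intro k hk hk'
        simp only [Finset.mem_range, Finset.mem_Ico, not_and, not_lt] at hk hk'
        rcases lt_or_ge k c with hkc | hkc
        · rw [Nat.choose_eq_zero_of_lt hkc]; ring
        · rw [Nat.choose_eq_zero_of_lt (show m + k < d by omega)]; ring)]
  -- rewrite each term
  rw [Finset.sum_congr rfl (fun k hk => by
    simp only [Finset.mem_Ico] at hk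
    have hkc : c ≤ k := le_trans (le_max_left _ _) hk.1
    have hkd : d ≤ m + k := by omega
    calc a.choose k * b.choose (m + k) * k.choose c * (m + k).choose d
        = (a.choose k * k.choose c) * (b.choose (m + k) * (m + k).choose d) := by ring
      _ = a.choose c * b.choose d *
            ((a - c).choose (k - c) * (b - d).choose (m + k - d)) := by
          rw [trinom a k c hkc, trinom b (m + k) d hkd]; ring)]
  rw [← Finset.mul_sum]
  have key : ∑ k ∈ Finset.Ico L (a + 1),
      (a - c).choose (k - c) * (b - d).choose (m + k - d) =
      (a + b - c - d).choose (m + a - d) := by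
    have hab : a + b - c - d = (a - c) + (b - d) := by omega
    rw [hab, Nat.add_choose_eq, Finset.Nat.sum_antidiagonal_eq_sum_range_succ_mk]
    rw [← Finset.sum_subset
        (show Finset.range (a - L + 1) ⊆ Finset.range (m + a - d + 1) by
          apply Finset.range_subset_range.2; omega)
        (by
          intro i hi hi'
          simp only [Finset.mem_range] at hi hi'
          rw [Nat.choose_eq_zero_of_lt (show a - c < i by omega)]
          ring)]
    rw [Finset.sum_Ico_eq_sum_range]
    rw [show a + 1 - L = a - L + 1 by omega]
    rw [← Finset.sum_range_reflect (fun j => (a - c).choose (L + j - c) *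
          (b - d).choose (m + (L + j) - d))]
    refine Finset.sum_congr rfl (fun j hj => ?_)
    simp only [Finset.mem_range] at hj
    rw [show L + (a - L + 1 - 1 - j) - c = a - c - j by omega,
        show m + (L + (a - L + 1 - 1 - j)) - d = m + a - d - j by omega,
        Nat.choose_symm (show j ≤ a - c by omega)]
  rw [key]; ring
end

section
/- For natural numbers n, c, d, the sum over k from 0 to n of C(n,k)^2·C(k,c)·C(k,d) equals C(2n-c-d, n-d)·C(n,c)·C(n,d). -/
lemma vand_aux (a b m : ℕ) :
    ∑ j ∈ Finset.range (m + 1), a.choose j * b.choose (m - j) = (a + b).choose m := by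
  rw [Nat.add_choose_eq, Finset.Nat.sum_antidiagonal_eq_sum_range_succ_mk]

theorem stmt_5 (n c d : ℕ) :
    ∑ k ∈ Finset.range (n + 1),
      (n.choose k) ^ 2 * k.choose c * k.choose d =
    (2 * n - c - d).choose (n - d) * n.choose c * n.choose d := by
  by_cases hc : c ≤ n
  · by_cases hd : d ≤ n
    · have h1 : ∑ k ∈ Finset.range (n + 1),
          (n.choose k) ^ 2 * k.choose c * k.choose d =
          ∑ k ∈ Finset.Ico d (n + 1), (n.choose k) ^ 2 * k.choose c * k.choose d := by
        rw [Finset.range_eq_Ico]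
        refine (Finset.sum_subset (Finset.Ico_subset_Ico (Nat.zero_le d) le_rfl) ?_).symm
        intro x hx hx'
        simp only [Finset.mem_Ico] at hx hx'
        have : x < d := by omega
        rw [Nat.choose_eq_zero_of_lt this, Nat.mul_zero]
      have h2 : ∀ k ∈ Finset.Ico d (n + 1),
          (n.choose k) ^ 2 * k.choose c * k.choose d =
          n.choose c * n.choose d * ((n - d).choose (k - d) * (n - c).choose (n - k)) := by
        intro k hk
        simp only [Finset.mem_Ico] at hk
        obtain ⟨hdk, hkn⟩ := hk
        have hkn : k ≤ n := by omega
        by_cases hck : c ≤ k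
        · have e1 : n.choose k * k.choose c = n.choose c * (n - c).choose (k - c) :=
            Nat.choose_mul hck
          have e2 : n.choose k * k.choose d = n.choose d * (n - d).choose (k - d) :=
            Nat.choose_mul hdk
          have e3 : (n - c).choose (k - c) = (n - c).choose (n - k) := by
            rw [← Nat.choose_symm (show k - c ≤ n - c by omega)]
            congr 1
            omega
          calc (n.choose k) ^ 2 * k.choose c * k.choose d
              = (n.choose k * k.choose c) * (n.choose k * k.choose d) := by ring
            _ = (n.choose c * (n - c).choose (k - c)) * (n.choose d * (n - d).choose (k - d)) := by
                rw [e1, e2]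
            _ = n.choose c * n.choose d * ((n - d).choose (k - d) * (n - c).choose (n - k)) := by
                rw [e3]; ring
        · have : k.choose c = 0 := Nat.choose_eq_zero_of_lt (by omega)
          rw [this]
          have : (n - c).choose (n - k) = 0 := Nat.choose_eq_zero_of_lt (by omega)
          rw [this]
          ring
      rw [h1, Finset.sum_congr rfl h2, ← Finset.mul_sum]
      have h3 : ∑ k ∈ Finset.Ico d (n + 1),
          (n - d).choose (k - d) * (n - c).choose (n - k) =
          (2 * n - c - d).choose (n - d) := by
        rw [Finset.sum_Ico_eq_sum_range]
        have hn1 : n + 1 - d = (n - d) + 1 := by omega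
        rw [hn1]
        have : ∀ j ∈ Finset.range ((n - d) + 1),
            (n - d).choose (d + j - d) * (n - c).choose (n - (d + j)) =
            (n - d).choose j * (n - c).choose ((n - d) - j) := by
          intro j hj
          congr 2 <;> omega
        rw [Finset.sum_congr rfl this, vand_aux]
        congr 1
        omega
      rw [h3]
      ring
    · push_neg at hd
      have h0 : ∀ k ∈ Finset.range (n + 1),
          (n.choose k) ^ 2 * k.choose c * k.choose d = 0 := by
        intro k hk
        simp only [Finset.mem_range] at hk
        rw [Nat.choose_eq_zero_of_lt (by omega : k < d), Nat.mul_zero]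
      rw [Finset.sum_congr rfl h0, Finset.sum_const_zero,
        Nat.choose_eq_zero_of_lt hd, Nat.mul_zero]
  · push_neg at hc
    have h0 : ∀ k ∈ Finset.range (n + 1),
        (n.choose k) ^ 2 * k.choose c * k.choose d = 0 := by
      intro k hk
      simp only [Finset.mem_range] at hk
      rw [Nat.choose_eq_zero_of_lt (by omega : k < c), Nat.mul_zero, Nat.zero_mul]
    rw [Finset.sum_congr rfl h0, Finset.sum_const_zero,
      Nat.choose_eq_zero_of_lt hc, Nat.mul_zero, Nat.zero_mul]
end

section
/- For every natural number n, the sum over k from 0 to n of C(n,k)^2·H(k) equals C(2n,n)·(2·H(n) - H(2n)), where H(m) is the m-th harmonic number. -/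
noncomputable def H (m : ℕ) : ℚ := ∑ j ∈ Finset.range m, (1 : ℚ) / (j + 1)

open Polynomial Finset

lemma H_succ (m : ℕ) : H (m + 1) = H m + 1 / (m + 1) := by
  simp [H, Finset.sum_range_succ]

lemma key_deriv (j m : ℕ) (h : j ≤ m) :
    (Polynomial.derivative (descPochhammer ℚ j)).eval (m : ℚ)
      = (m.descFactorial j : ℚ) * (H m - H (m - j)) := by
  induction j with
  | zero => simp
  | succ j ih =>
    have hj : j ≤ m := Nat.le_of_succ_le h
    have hc : (j : ℚ) < (m : ℚ) := by exact_mod_cast h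
    have hcne : (m : ℚ) - j ≠ 0 := by linarith
    have hsub : m - j = (m - (j + 1)) + 1 := by omega
    have hHm : H (m - j) = H (m - (j + 1)) + 1 / ((m : ℚ) - j) := by
      rw [hsub, H_succ]
      congr 1
      have : ((m - (j+1) : ℕ) : ℚ) = (m : ℚ) - j - 1 := by
        have := Nat.cast_sub (R := ℚ) h
        push_cast [this]; ring
      rw [this]; ring_nf
    have hdf : (m.descFactorial (j + 1) : ℚ)
        = ((m : ℚ) - j) * (m.descFactorial j : ℚ) := by
      rw [Nat.descFactorial_succ]
      push_cast [Nat.cast_sub hj]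
      ring
    rw [descPochhammer_succ_right, derivative_mul]
    simp only [derivative_sub, derivative_X, derivative_natCast, sub_zero, eval_add, eval_mul,
      eval_sub, eval_X, eval_natCast, mul_one, ih hj, descPochhammer_eval_eq_descFactorial]
    rw [hHm, hdf]
    field_simp
    ring


-- Nat Vandermonde in the needed form
lemma nat_vdm (m n : ℕ) :
    ∑ k ∈ range (n + 1), m.choose (n - k) * n.choose k = (m + n).choose n := by
  rw [Nat.add_choose_eq, Finset.Nat.sum_antidiagonal_eq_sum_range_succ_mk]
  rw [← Finset.sum_range_reflect]
  refine Finset.sum_congr rfl fun k hk => ?_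
  have hk' : k ≤ n := Nat.lt_succ_iff.mp (Finset.mem_range.mp hk)
  simp only [Nat.succ_sub_one, Nat.add_sub_cancel]
  rw [Nat.sub_sub_self hk']

lemma nat_sum_eq (m n : ℕ) :
    ∑ k ∈ range (n + 1), n.choose k * n.descFactorial k * m.descFactorial (n - k)
      = (m + n).descFactorial n := by
  have h1 : (m + n).descFactorial n = (Nat.factorial n) * (m + n).choose n := by
    rw [Nat.descFactorial_eq_factorial_mul_choose]
  rw [h1, ← nat_vdm, Finset.mul_sum]
  refine Finset.sum_congr rfl fun k hk => ?_
  have hk' : k ≤ n := Nat.lt_succ_iff.mp (Finset.mem_range.mp hk)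
  rw [Nat.descFactorial_eq_factorial_mul_choose, Nat.descFactorial_eq_factorial_mul_choose]
  have hsym : m.choose (n - k) * n.choose k = n.choose k * m.choose (n - k) := Nat.mul_comm _ _
  rw [hsym]
  have : n.choose k * (Nat.factorial k * n.choose k) * (Nat.factorial (n-k) * m.choose (n - k))
      = (n.choose k * Nat.factorial k * Nat.factorial (n-k)) * (n.choose k * m.choose (n - k)) := by ring
  rw [this, Nat.choose_mul_factorial_mul_factorial hk']

lemma key_poly (n : ℕ) :
    ∑ k ∈ range (n + 1),
        Polynomial.C ((n.choose k * n.descFactorial k : ℕ) : ℚ) * descPochhammer ℚ (n - k)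
      = (descPochhammer ℚ n).comp (Polynomial.X + Polynomial.C (n : ℚ)) := by
  apply Polynomial.eq_of_infinite_eval_eq
  refine Set.Infinite.mono ?_ (Set.infinite_range_of_injective (Nat.cast_injective (R := ℚ)))
  rintro x ⟨m, rfl⟩
  simp only [Set.mem_setOf_eq, eval_finset_sum, eval_mul, eval_C, eval_comp, eval_add, eval_X,
    descPochhammer_eval_eq_descFactorial]
  have : (m : ℚ) + (n : ℚ) = ((m + n : ℕ) : ℚ) := by push_cast; ring
  rw [this, descPochhammer_eval_eq_descFactorial]
  rw [← nat_sum_eq m n]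
  push_cast
  rfl

-- coefficient identity over ℚ
lemma coeff_id (n k : ℕ) (hk : k ≤ n) :
    ((n.choose k * n.descFactorial k : ℕ) : ℚ) * (n.descFactorial (n - k) : ℚ)
      = (Nat.factorial n : ℚ) * (n.choose k : ℚ) ^ 2 := by
  have h : n.choose k * n.descFactorial k * n.descFactorial (n - k)
      = Nat.factorial n * n.choose k ^ 2 := by
    rw [Nat.descFactorial_eq_factorial_mul_choose, Nat.descFactorial_eq_factorial_mul_choose,
      Nat.choose_symm hk]
    have e : n.choose k * (Nat.factorial k * n.choose k) * (Nat.factorial (n - k) * n.choose k)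
        = (n.choose k * Nat.factorial k * Nat.factorial (n - k)) * n.choose k ^ 2 := by ring
    rw [e, Nat.choose_mul_factorial_mul_factorial hk]
  exact_mod_cast congrArg (Nat.cast : ℕ → ℚ) h

-- main derivative consequence
lemma main_eq (n : ℕ) :
    ∑ k ∈ range (n + 1), (Nat.factorial n : ℚ) * (n.choose k : ℚ) ^ 2 * (H n - H k)
      = (Nat.factorial n : ℚ) * ((2 * n).choose n : ℚ) * (H (2 * n) - H n) := by
  have h := congrArg (fun p => (Polynomial.derivative p).eval (n : ℚ)) (key_poly n)
  simp only [derivative_sum, derivative_C_mul, eval_finset_sum, eval_mul, eval_C,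
    derivative_comp, derivative_add, derivative_X, derivative_C, add_zero, mul_one,
    eval_comp, eval_add, eval_X, one_mul, eval_one] at h
  have hR : ((n : ℚ) + n) = ((2 * n : ℕ) : ℚ) := by push_cast; ring
  rw [hR, key_deriv n (2 * n) (by omega)] at h
  have h2n : 2 * n - n = n := by omega
  have hdf : (((2 * n).descFactorial n : ℕ) : ℚ)
      = (Nat.factorial n : ℚ) * ((2 * n).choose n : ℚ) := by
    rw [Nat.descFactorial_eq_factorial_mul_choose]; push_cast; ring
  rw [h2n, hdf] at h
  rw [← h]
  refine Finset.sum_congr rfl fun k hk => ?_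
  have hk' : k ≤ n := Nat.lt_succ_iff.mp (Finset.mem_range.mp hk)
  rw [key_deriv (n - k) n (Nat.sub_le n k), Nat.sub_sub_self hk', ← mul_assoc, coeff_id n k hk']

lemma sum_sq (n : ℕ) :
    ∑ k ∈ range (n + 1), (n.choose k : ℚ) ^ 2 = ((2 * n).choose n : ℚ) := by
  have h : ∑ k ∈ range (n + 1), n.choose k * n.choose k = (2 * n).choose n := by
    have h2 : 2 * n = n + n := by ring
    rw [h2, ← nat_vdm n n]
    refine Finset.sum_congr rfl fun k hk => ?_
    have hk' : k ≤ n := Nat.lt_succ_iff.mp (Finset.mem_range.mp hk)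
    rw [Nat.choose_symm hk']
  calc ∑ k ∈ range (n + 1), (n.choose k : ℚ) ^ 2
      = ((∑ k ∈ range (n + 1), n.choose k * n.choose k : ℕ) : ℚ) := by
        push_cast; exact Finset.sum_congr rfl fun k _ => by ring
    _ = ((2 * n).choose n : ℚ) := by rw [h]

theorem stmt_8 (n : ℕ) :
    ∑ k ∈ Finset.range (n + 1), (n.choose k : ℚ) ^ 2 * H k =
    ((2 * n).choose n : ℚ) * (2 * H n - H (2 * n)) := by
  have hfac : (Nat.factorial n : ℚ) ≠ 0 := by exact_mod_cast Nat.factorial_ne_zero n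
  have h1 : ∑ k ∈ range (n + 1), (n.choose k : ℚ) ^ 2 * (H n - H k)
      = ((2 * n).choose n : ℚ) * (H (2 * n) - H n) := by
    apply mul_left_cancel₀ hfac
    have hL : (Nat.factorial n : ℚ) * ∑ k ∈ range (n + 1), (n.choose k : ℚ) ^ 2 * (H n - H k)
        = ∑ k ∈ range (n + 1), (Nat.factorial n : ℚ) * (n.choose k : ℚ) ^ 2 * (H n - H k) := by
      rw [Finset.mul_sum]; exact Finset.sum_congr rfl fun k _ => by ring
    rw [hL, main_eq n]; ring
  calc ∑ k ∈ Finset.range (n + 1), (n.choose k : ℚ) ^ 2 * H k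
      = ∑ k ∈ range (n + 1),
          ((n.choose k : ℚ) ^ 2 * H n - (n.choose k : ℚ) ^ 2 * (H n - H k)) :=
        Finset.sum_congr rfl fun k _ => by ring
    _ = (∑ k ∈ range (n + 1), (n.choose k : ℚ) ^ 2) * H n
        - ∑ k ∈ range (n + 1), (n.choose k : ℚ) ^ 2 * (H n - H k) := by
        rw [Finset.sum_sub_distrib, Finset.sum_mul]
    _ = ((2 * n).choose n : ℚ) * (2 * H n - H (2 * n)) := by rw [h1, sum_sq]; ring
end

section
/- For every natural number n, the sum over k from 0 to n of C(n,k)^2·H(k)·H(n-k) equals C(2n,n)·(H2(n) - H2(2n) + (2·H(n) - H(2n))^2), where H(m) is the m-th harmonic number and H2(m) = Σ_{j=1}^m 1/j^2. -/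
noncomputable def H2 (m : ℕ) : ℚ := ∑ j ∈ Finset.range m, (1 : ℚ) / ((j : ℚ) + 1) ^ 2
open Polynomial Finset

noncomputable def ff (k : ℕ) : Polynomial ℚ := ∏ i ∈ range k, (X - C (i:ℚ))

lemma ff_succ (k : ℕ) : ff (k+1) = ff k * (X - C (k:ℚ)) := prod_range_succ _ _

lemma ff_eval (m k : ℕ) : (ff k).eval (m:ℚ) = (k.factorial : ℚ) * (m.choose k : ℚ) := by
  induction k with
  | zero => simp [ff]
  | succ k ih =>
    rw [ff_succ, eval_mul, ih]
    simp only [eval_sub, eval_X, eval_C]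
    rcases lt_or_ge k m with h | h
    · have h1 : (m.choose (k+1) : ℚ) * (k+1) = (m.choose k : ℚ) * ((m:ℚ) - k) := by
        have := Nat.choose_succ_right_eq m k
        have h2 : ((m - k : ℕ) : ℚ) = (m:ℚ) - k := by
          rw [Nat.cast_sub h.le]
        calc (m.choose (k+1) : ℚ) * (k+1) = ((m.choose (k+1) * (k+1) : ℕ) : ℚ) := by push_cast; ring
          _ = ((m.choose k * (m - k) : ℕ) : ℚ) := by rw [this]
          _ = (m.choose k : ℚ) * ((m:ℚ) - k) := by push_cast [Nat.cast_sub h.le]; ring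
      rw [Nat.factorial_succ]
      push_cast
      linear_combination (-(k.factorial:ℚ)) * h1
    · rcases eq_or_lt_of_le h with h | h
      · subst h
        rw [Nat.choose_succ_self, Nat.choose_self]
        push_cast; ring
      · rw [Nat.choose_eq_zero_of_lt h, Nat.choose_eq_zero_of_lt (Nat.lt_succ_of_lt h)]
        simp

noncomputable def sg (m k : ℕ) : ℚ := ∑ i ∈ range k, ((m:ℚ) - i)⁻¹
noncomputable def tg (m k : ℕ) : ℚ := ∑ i ∈ range k, (((m:ℚ) - i)^2)⁻¹

lemma ff_deriv_eval (m k : ℕ) (hk : k ≤ m) :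
    (derivative (ff k)).eval (m:ℚ) = (ff k).eval (m:ℚ) * sg m k := by
  induction k with
  | zero => simp [ff, sg]
  | succ k ih =>
    have hkm : k < m := hk
    have hne : (m:ℚ) - k ≠ 0 := by
      have : (k:ℚ) < m := by exact_mod_cast hkm
      linarith
    rw [ff_succ]
    rw [derivative_mul, eval_add, eval_mul, eval_mul, ih hkm.le]
    simp only [derivative_sub, derivative_X, derivative_C, sub_zero, eval_one, eval_sub, eval_X, eval_C, mul_one]
    have hs : sg m (k+1) = sg m k + ((m:ℚ)-k)⁻¹ := by
      simp [sg, sum_range_succ]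
    rw [eval_mul, eval_sub, eval_X, eval_C, hs]
    field_simp

lemma ff_deriv2_eval (m k : ℕ) (hk : k ≤ m) :
    (derivative (derivative (ff k))).eval (m:ℚ) = (ff k).eval (m:ℚ) * ((sg m k)^2 - tg m k) := by
  induction k with
  | zero => simp [ff, sg, tg]
  | succ k ih =>
    have hkm : k < m := hk
    have hne : (m:ℚ) - k ≠ 0 := by
      have : (k:ℚ) < m := by exact_mod_cast hkm
      linarith
    rw [ff_succ]
    rw [derivative_mul, derivative_add, derivative_mul, derivative_mul]
    simp only [derivative_sub, derivative_X, derivative_C, sub_zero, mul_one]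
    rw [eval_add, eval_add, eval_add, eval_mul, eval_mul, eval_mul]
    simp only [derivative_one, eval_mul, eval_sub, eval_X, eval_C, eval_zero, mul_zero, zero_mul]
    rw [ih hkm.le, ff_deriv_eval m k hkm.le]
    have hs : sg m (k+1) = sg m k + ((m:ℚ)-k)⁻¹ := by
      simp [sg, sum_range_succ]
    have ht : tg m (k+1) = tg m k + (((m:ℚ)-k)^2)⁻¹ := by
      simp [tg, sum_range_succ]
    rw [hs, ht]
    have h1 : ((m:ℚ) - k) * ((m:ℚ)-k)⁻¹ = 1 := mul_inv_cancel₀ hne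
    have h2 : ((m:ℚ) - k)^2 * (((m:ℚ)-k)^2)⁻¹ = 1 := mul_inv_cancel₀ (pow_ne_zero 2 hne)
    field_simp
    ring
lemma vdm (m n : ℕ) : (m + n).choose n = ∑ k ∈ range (n+1), m.choose k * n.choose (n - k) := by
  rw [Nat.add_choose_eq]
  exact Finset.Nat.sum_antidiagonal_eq_sum_range_succ_mk _ n

lemma natcast_infinite : {x : ℚ | ∃ m : ℕ, (m:ℚ) = x}.Infinite := by
  have : Set.range (Nat.cast : ℕ → ℚ) ⊆ {x : ℚ | ∃ m : ℕ, (m:ℚ) = x} := by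
    rintro x ⟨m, rfl⟩; exact ⟨m, rfl⟩
  exact (Set.infinite_range_of_injective Nat.cast_injective).mono this

lemma nfac_eq {n k : ℕ} (hk : k ≤ n) :
    (n.choose k : ℚ) * (k.factorial : ℚ) * ((n-k).factorial : ℚ) = (n.factorial : ℚ) := by
  exact_mod_cast congrArg (Nat.cast : ℕ → ℚ) (Nat.choose_mul_factorial_mul_factorial hk)

lemma Q1 (n : ℕ) :
    ∑ k ∈ range (n+1), C ((n.choose k:ℚ)^2 * ((n-k).factorial:ℚ)) * ff k
      = (ff n).comp (X + C (n:ℚ)) := by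
  apply eq_of_infinite_eval_eq
  apply natcast_infinite.mono
  rintro x ⟨m, rfl⟩
  simp only [Set.mem_setOf_eq, eval_finset_sum, eval_mul, eval_C, eval_comp, eval_add, eval_X]
  have hc : ((m:ℚ) + n) = ((m + n : ℕ) : ℚ) := by push_cast; ring
  rw [hc, ff_eval]
  have : ∀ k ∈ range (n+1),
      (n.choose k:ℚ)^2 * ((n-k).factorial:ℚ) * eval (m:ℚ) (ff k)
        = (n.factorial : ℚ) * ((m.choose k : ℚ) * (n.choose k : ℚ)) := by
    intro k hk
    rw [mem_range, Nat.lt_succ_iff] at hk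
    rw [ff_eval]
    have h := nfac_eq hk
    linear_combination (n.choose k:ℚ) * (m.choose k:ℚ) * h
  rw [sum_congr rfl this, ← mul_sum]
  congr 1
  have : ((m+n).choose n : ℚ) = ∑ k ∈ range (n+1), (m.choose k : ℚ) * (n.choose k : ℚ) := by
    rw [vdm m n]
    push_cast
    apply sum_congr rfl
    intro k hk
    rw [mem_range, Nat.lt_succ_iff] at hk
    rw [Nat.choose_symm hk]
  rw [this]

lemma Q2 (n : ℕ) :
    ∑ k ∈ range (n+1), C ((n.choose k:ℚ)) * (ff k * ff (n - k))
      = (ff n).comp (C 2 * X) := by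
  apply eq_of_infinite_eval_eq
  apply natcast_infinite.mono
  rintro x ⟨m, rfl⟩
  simp only [Set.mem_setOf_eq, eval_finset_sum, eval_mul, eval_C, eval_comp, eval_add, eval_X]
  have hc : ((2:ℚ) * m) = ((m + m : ℕ) : ℚ) := by push_cast; ring
  rw [hc, ff_eval]
  have : ∀ k ∈ range (n+1),
      (n.choose k:ℚ) * (eval (m:ℚ) (ff k) * eval (m:ℚ) (ff (n - k)))
        = (n.factorial : ℚ) * ((m.choose k : ℚ) * (m.choose (n-k) : ℚ)) := by
    intro k hk
    rw [mem_range, Nat.lt_succ_iff] at hk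
    rw [ff_eval, ff_eval]
    have h := nfac_eq hk
    linear_combination (m.choose k:ℚ) * (m.choose (n-k):ℚ) * h
  rw [sum_congr rfl this, ← mul_sum]
  congr 1
  have h2 : (m + m).choose n = ∑ k ∈ range (n+1), m.choose k * m.choose (n - k) := by
    rw [Nat.add_choose_eq]
    exact Finset.Nat.sum_antidiagonal_eq_sum_range_succ_mk _ n
  rw [h2]; push_cast; ring
lemma sg_H (m k : ℕ) (hk : k ≤ m) : sg m k = H m - H (m - k) := by
  induction k with
  | zero => simp [sg]
  | succ k ih =>
    have hkm : k < m := hk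
    have hs : sg m (k+1) = sg m k + ((m:ℚ)-k)⁻¹ := by simp [sg, sum_range_succ]
    rw [hs, ih hkm.le]
    have hj : m - k = (m - (k+1)) + 1 := by omega
    have hcast : ((m:ℚ) - k) = ((m - (k+1) : ℕ) : ℚ) + 1 := by
      have : ((m - k : ℕ) : ℚ) = (m:ℚ) - k := by rw [Nat.cast_sub hkm.le]
      rw [← this, hj]; push_cast; ring
    have hH : H ((m-(k+1)) + 1) = H (m-(k+1)) + 1/(((m-(k+1) : ℕ) : ℚ) + 1) := by
      simp [H, sum_range_succ]
    rw [hj, hH, hcast, one_div]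
    ring

lemma tg_H2 (m k : ℕ) (hk : k ≤ m) : tg m k = H2 m - H2 (m - k) := by
  induction k with
  | zero => simp [tg]
  | succ k ih =>
    have hkm : k < m := hk
    have hs : tg m (k+1) = tg m k + (((m:ℚ)-k)^2)⁻¹ := by simp [tg, sum_range_succ]
    rw [hs, ih hkm.le]
    have hj : m - k = (m - (k+1)) + 1 := by omega
    have hcast : ((m:ℚ) - k) = ((m - (k+1) : ℕ) : ℚ) + 1 := by
      have : ((m - k : ℕ) : ℚ) = (m:ℚ) - k := by rw [Nat.cast_sub hkm.le]
      rw [← this, hj]; push_cast; ring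
    have hH : H2 ((m-(k+1)) + 1) = H2 (m-(k+1)) + 1/((((m-(k+1) : ℕ)) : ℚ) + 1)^2 := by
      simp [H2, sum_range_succ]
    rw [hj, hH, hcast, one_div]
    ring

lemma twon_cast (n : ℕ) : ((2*n : ℕ) : ℚ) = (n:ℚ) + n := by push_cast; ring

lemma cw (n k : ℕ) (hk : k ≤ n) :
    (n.choose k:ℚ)^2 * ((n-k).factorial:ℚ) * ((k.factorial:ℚ) * (n.choose k:ℚ)) =
      (n.factorial:ℚ) * (n.choose k:ℚ)^2 := by
  have h := nfac_eq hk
  linear_combination (n.choose k:ℚ)^2 * h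

lemma a2n (n : ℕ) : (ff n).eval ((2*n : ℕ) : ℚ) = (n.factorial:ℚ) * ((2*n).choose n : ℚ) := by
  rw [ff_eval]

lemma E0 (n : ℕ) : ∑ k ∈ range (n+1), (n.choose k:ℚ)^2 = ((2*n).choose n : ℚ) := by
  have h := vdm n n
  have h2 : (2*n).choose n = ∑ k ∈ range (n+1), n.choose k * n.choose (n-k) := by
    rw [two_mul]; exact h
  rw [h2]
  push_cast
  apply sum_congr rfl
  intro k hk
  rw [mem_range, Nat.lt_succ_iff] at hk
  rw [Nat.choose_symm hk]; ring

lemma E1 (n : ℕ) : ∑ k ∈ range (n+1), (n.choose k:ℚ)^2 * sg n k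
    = ((2*n).choose n : ℚ) * sg (2*n) n := by
  have h := congrArg (fun p => Polynomial.eval ((n:ℚ)) (derivative p)) (Q1 n)
  simp only [map_sum, derivative_C_mul, eval_finset_sum, eval_mul, eval_C,
    derivative_comp, derivative_add, derivative_X, derivative_C, add_zero, one_mul,
    eval_comp, eval_add, eval_X] at h
  rw [← twon_cast] at h
  have hL : ∀ k ∈ range (n+1),
      (n.choose k:ℚ)^2 * ((n-k).factorial:ℚ) * eval (n:ℚ) (derivative (ff k))
        = (n.factorial:ℚ) * ((n.choose k:ℚ)^2 * sg n k) := by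
    intro k hk
    rw [mem_range, Nat.lt_succ_iff] at hk
    rw [ff_deriv_eval n k hk, ff_eval]
    have := cw n k hk
    linear_combination sg n k * this
  rw [sum_congr rfl hL, ← mul_sum, ff_deriv_eval (2*n) n (by omega), a2n] at h
  have hf : (n.factorial : ℚ) ≠ 0 := by exact_mod_cast n.factorial_ne_zero
  apply mul_left_cancel₀ hf
  linear_combination h

lemma E2a (n : ℕ) : ∑ k ∈ range (n+1), (n.choose k:ℚ)^2 * ((sg n k)^2 - tg n k)
    = ((2*n).choose n : ℚ) * ((sg (2*n) n)^2 - tg (2*n) n) := by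
  have h := congrArg (fun p => Polynomial.eval ((n:ℚ)) (derivative (derivative p))) (Q1 n)
  simp only [map_sum, derivative_C_mul, eval_finset_sum, eval_mul, eval_C,
    derivative_comp, derivative_add, derivative_X, derivative_C, add_zero, one_mul,
    eval_comp, eval_add, eval_X] at h
  rw [← twon_cast] at h
  have hL : ∀ k ∈ range (n+1),
      (n.choose k:ℚ)^2 * ((n-k).factorial:ℚ) * eval (n:ℚ) (derivative (derivative (ff k)))
        = (n.factorial:ℚ) * ((n.choose k:ℚ)^2 * ((sg n k)^2 - tg n k)) := by
    intro k hk
    rw [mem_range, Nat.lt_succ_iff] at hk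
    rw [ff_deriv2_eval n k hk, ff_eval]
    have := cw n k hk
    linear_combination ((sg n k)^2 - tg n k) * this
  rw [sum_congr rfl hL, ← mul_sum, ff_deriv2_eval (2*n) n (by omega), a2n] at h
  have hf : (n.factorial : ℚ) ≠ 0 := by exact_mod_cast n.factorial_ne_zero
  apply mul_left_cancel₀ hf
  linear_combination h

lemma d2_mul (p q : Polynomial ℚ) :
    derivative (derivative (p * q)) =
      derivative (derivative p) * q + 2 * (derivative p * derivative q)
        + p * derivative (derivative q) := by
  simp only [derivative_mul, derivative_add]
  ring

lemma E2b (n : ℕ) : ∑ k ∈ range (n+1), (n.choose k:ℚ)^2 *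
      (((sg n k)^2 - tg n k) + 2 * (sg n k * sg n (n-k)) + ((sg n (n-k))^2 - tg n (n-k)))
    = 4 * ((2*n).choose n : ℚ) * ((sg (2*n) n)^2 - tg (2*n) n) := by
  have h := congrArg (fun p => Polynomial.eval ((n:ℚ)) (derivative (derivative p))) (Q2 n)
  simp only [map_sum, derivative_C_mul, eval_finset_sum, eval_mul, eval_C,
    derivative_comp, derivative_X, derivative_C, mul_one, eval_comp, eval_X] at h
  have hR : eval ((2:ℚ) * n) (ff n) = eval ((2*n:ℕ):ℚ) (ff n) := by push_cast; ring_nf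
  have hL : ∀ k ∈ range (n+1),
      (n.choose k:ℚ) * eval (n:ℚ) (derivative (derivative (ff k * ff (n-k))))
        = (n.factorial:ℚ) * ((n.choose k:ℚ)^2 *
            (((sg n k)^2 - tg n k) + 2 * (sg n k * sg n (n-k)) + ((sg n (n-k))^2 - tg n (n-k)))) := by
    intro k hk
    rw [mem_range, Nat.lt_succ_iff] at hk
    rw [d2_mul]
    simp only [eval_add, eval_mul, eval_ofNat]
    rw [ff_deriv2_eval n k hk, ff_deriv2_eval n (n-k) (by omega),
      ff_deriv_eval n k hk, ff_deriv_eval n (n-k) (by omega), ff_eval, ff_eval]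
    have hfac := nfac_eq hk
    have hsym : (n.choose (n-k) : ℚ) = (n.choose k : ℚ) := by
      exact_mod_cast congrArg (Nat.cast (R:=ℚ)) (Nat.choose_symm hk)
    rw [hsym]
    linear_combination ((n.choose k:ℚ)^2 *
      (((sg n k)^2 - tg n k) + 2 * (sg n k * sg n (n-k)) + ((sg n (n-k))^2 - tg n (n-k)))) * hfac
  have h2 : (2:ℚ) * (n:ℚ) = ((2*n:ℕ):ℚ) := by push_cast; ring
  rw [sum_congr rfl hL, ← mul_sum, h2, ff_deriv2_eval (2*n) n (by omega), a2n] at h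
  have hf : (n.factorial : ℚ) ≠ 0 := by exact_mod_cast n.factorial_ne_zero
  apply mul_left_cancel₀ hf
  linear_combination h
lemma Rgen (n : ℕ) (g : ℕ → ℚ) :
    ∑ k ∈ range (n+1), (n.choose k:ℚ)^2 * g (n-k)
      = ∑ k ∈ range (n+1), (n.choose k:ℚ)^2 * g k := by
  have h := Finset.sum_range_reflect (fun k => (n.choose k:ℚ)^2 * g (n-k)) (n+1)
  rw [← h]
  apply sum_congr rfl
  intro j hj
  rw [mem_range, Nat.lt_succ_iff] at hj
  have h1 : n + 1 - 1 - j = n - j := by omega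
  have h2 : n - (n - j) = j := by omega
  simp only [h1, h2]
  have h3 : (n.choose (n-j) : ℚ) = (n.choose j : ℚ) := by
    exact_mod_cast congrArg (Nat.cast (R:=ℚ)) (Nat.choose_symm hj)
  rw [h3]

lemma Ecross (n : ℕ) : ∑ k ∈ range (n+1), (n.choose k:ℚ)^2 * (sg n k * sg n (n-k))
    = ((2*n).choose n : ℚ) * ((sg (2*n) n)^2 - tg (2*n) n) := by
  have hb := E2b n
  have ha := E2a n
  have hr : ∑ k ∈ range (n+1), (n.choose k:ℚ)^2 * ((sg n (n-k))^2 - tg n (n-k))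
      = ((2*n).choose n : ℚ) * ((sg (2*n) n)^2 - tg (2*n) n) :=
    (Rgen n (fun k => (sg n k)^2 - tg n k)).trans ha
  have hsplit : ∑ k ∈ range (n+1), (n.choose k:ℚ)^2 *
      (((sg n k)^2 - tg n k) + 2 * (sg n k * sg n (n-k)) + ((sg n (n-k))^2 - tg n (n-k)))
      = (∑ k ∈ range (n+1), (n.choose k:ℚ)^2 * ((sg n k)^2 - tg n k))
        + 2 * (∑ k ∈ range (n+1), (n.choose k:ℚ)^2 * (sg n k * sg n (n-k)))
        + (∑ k ∈ range (n+1), (n.choose k:ℚ)^2 * ((sg n (n-k))^2 - tg n (n-k))) := by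
    rw [mul_sum, ← sum_add_distrib, ← sum_add_distrib]
    apply sum_congr rfl
    intro k _
    ring
  rw [hsplit, ha, hr] at hb
  linarith

theorem stmt_9 (n : ℕ) :
    ∑ k ∈ Finset.range (n + 1), (n.choose k : ℚ) ^ 2 * H k * H (n - k) =
    ((2 * n).choose n : ℚ) * (H2 n - H2 (2 * n) + (2 * H n - H (2 * n)) ^ 2) := by
  have hS : sg (2*n) n = H (2*n) - H n := by
    have h := sg_H (2*n) n (by omega)
    rwa [show 2*n - n = n by omega] at h
  have hT : tg (2*n) n = H2 (2*n) - H2 n := by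
    have h := tg_H2 (2*n) n (by omega)
    rwa [show 2*n - n = n by omega] at h
  have hterm : ∀ k ∈ range (n+1), (n.choose k:ℚ)^2 * H k * H (n-k)
      = (n.choose k:ℚ)^2 * (H n)^2 - H n * ((n.choose k:ℚ)^2 * sg n (n-k))
        - H n * ((n.choose k:ℚ)^2 * sg n k)
        + (n.choose k:ℚ)^2 * (sg n k * sg n (n-k)) := by
    intro k hk
    rw [mem_range, Nat.lt_succ_iff] at hk
    have e1 : H k = H n - sg n (n-k) := by
      have h := sg_H n (n-k) (by omega)
      rw [show n - (n-k) = k by omega] at h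
      linarith
    have e2 : H (n-k) = H n - sg n k := by
      have h := sg_H n k hk
      linarith
    rw [e1, e2]
    ring
  rw [sum_congr rfl hterm]
  have hsplit : ∑ k ∈ range (n+1), ((n.choose k:ℚ)^2 * (H n)^2
        - H n * ((n.choose k:ℚ)^2 * sg n (n-k)) - H n * ((n.choose k:ℚ)^2 * sg n k)
        + (n.choose k:ℚ)^2 * (sg n k * sg n (n-k)))
      = (∑ k ∈ range (n+1), (n.choose k:ℚ)^2) * (H n)^2
        - H n * (∑ k ∈ range (n+1), (n.choose k:ℚ)^2 * sg n (n-k))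
        - H n * (∑ k ∈ range (n+1), (n.choose k:ℚ)^2 * sg n k)
        + (∑ k ∈ range (n+1), (n.choose k:ℚ)^2 * (sg n k * sg n (n-k))) := by
    rw [sum_add_distrib, sum_sub_distrib, sum_sub_distrib, ← sum_mul, ← mul_sum, ← mul_sum]
  rw [hsplit, E0, E1, (Rgen n (sg n)).trans (E1 n), Ecross, hS, hT]
  ring
end

section
/- For every natural number n ≥ 2, the sum over k from 0 to n of C(n,k)^2·k^4 equals C(2n,n)·n^3·(n^3 + n^2 - 3n - 1)/(4(2n-1)(2n-3)), as an identity of rational numbers. -/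
open Finset

lemma lemA (m : ℕ) : ∑ j ∈ range (m + 1), m.choose j ^ 2 = (2 * m).choose m := by
  rw [two_mul, Nat.add_choose_eq,
    Finset.Nat.sum_antidiagonal_eq_sum_range_succ (fun i j => m.choose i * m.choose j)]
  refine Finset.sum_congr rfl fun j hj => ?_
  rw [Finset.mem_range] at hj
  rw [Nat.choose_symm (by omega), sq]

lemma lemB (m : ℕ) :
    ∑ j ∈ range (m + 1), (j : ℚ) * (m.choose j : ℚ) ^ 2
      = (m : ℚ) * ((2 * m).choose m : ℚ) / 2 := by
  have hrefl : ∑ j ∈ range (m + 1), (j : ℚ) * (m.choose j : ℚ) ^ 2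
      = ∑ j ∈ range (m + 1), ((m : ℚ) - j) * (m.choose j : ℚ) ^ 2 := by
    rw [← Finset.sum_range_reflect]
    refine Finset.sum_congr rfl fun j hj => ?_
    rw [Finset.mem_range] at hj
    have h1 : m + 1 - 1 - j = m - j := by omega
    rw [h1, Nat.choose_symm (by omega : j ≤ m), Nat.cast_sub (by omega : j ≤ m)]
  have h2 : (2 : ℚ) * ∑ j ∈ range (m + 1), (j : ℚ) * (m.choose j : ℚ) ^ 2
      = (m : ℚ) * ((2 * m).choose m : ℚ) := by
    calc (2 : ℚ) * ∑ j ∈ range (m + 1), (j : ℚ) * (m.choose j : ℚ) ^ 2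
        = (∑ j ∈ range (m + 1), (j : ℚ) * (m.choose j : ℚ) ^ 2)
          + ∑ j ∈ range (m + 1), ((m : ℚ) - j) * (m.choose j : ℚ) ^ 2 := by
          rw [← hrefl]; ring
      _ = ∑ j ∈ range (m + 1), (m : ℚ) * (m.choose j : ℚ) ^ 2 := by
          rw [← Finset.sum_add_distrib]; exact Finset.sum_congr rfl fun j _ => by ring
      _ = (m : ℚ) * ((2 * m).choose m : ℚ) := by
          rw [← Finset.mul_sum]
          congr 1
          push_cast [← lemA m]
          rfl
  linarith

lemma lemStep (m i : ℕ) :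
    ((i : ℚ) + 1) * (((m + 1).choose (i + 1) : ℕ) : ℚ) = ((m : ℚ) + 1) * (m.choose i : ℚ) := by
  have h := Nat.add_one_mul_choose_eq m i
  have h' := congrArg (fun x : ℕ => (x : ℚ)) h
  push_cast at h'
  linarith

lemma lemC (m : ℕ) :
    ∑ j ∈ range (m + 2), (j : ℚ) ^ 2 * ((m + 1).choose j : ℚ) ^ 2
      = ((m : ℚ) + 1) ^ 2 * ((2 * m).choose m : ℚ) := by
  rw [Finset.sum_range_succ' (fun j => (j : ℚ) ^ 2 * ((m + 1).choose j : ℚ) ^ 2) (m + 1)]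
  simp only [Nat.cast_zero, ne_eq, OfNat.ofNat_ne_zero, not_false_eq_true, zero_pow, zero_mul,
    add_zero]
  have : ∀ i ∈ range (m + 1),
      ((i : ℚ) + 1) ^ 2 * ((m + 1).choose (i + 1) : ℚ) ^ 2
        = ((m : ℚ) + 1) ^ 2 * ((m.choose i : ℚ)) ^ 2 := by
    intro i _
    have h := lemStep m i
    calc ((i : ℚ) + 1) ^ 2 * ((m + 1).choose (i + 1) : ℚ) ^ 2
        = (((i : ℚ) + 1) * ((m + 1).choose (i + 1) : ℚ)) ^ 2 := by ring
      _ = (((m : ℚ) + 1) * (m.choose i : ℚ)) ^ 2 := by rw [h]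
      _ = ((m : ℚ) + 1) ^ 2 * ((m.choose i : ℚ)) ^ 2 := by ring
  calc ∑ i ∈ range (m + 1), (((i : ℕ) + 1 : ℕ) : ℚ) ^ 2 * ((m + 1).choose (i + 1) : ℚ) ^ 2
      = ∑ i ∈ range (m + 1), ((m : ℚ) + 1) ^ 2 * ((m.choose i : ℚ)) ^ 2 := by
        refine Finset.sum_congr rfl fun i hi => ?_
        push_cast
        exact this i hi
    _ = ((m : ℚ) + 1) ^ 2 * ((2 * m).choose m : ℚ) := by
        rw [← Finset.mul_sum]
        congr 1
        have := congrArg (fun x : ℕ => (x : ℚ)) (lemA m)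
        push_cast at this ⊢
        convert this using 2

lemma lemI (m : ℕ) :
    ((m : ℚ) + 1) ^ 2 * ((2 * m + 2).choose (m + 1) : ℚ)
      = (2 * (m : ℚ) + 2) * (2 * (m : ℚ) + 1) * ((2 * m).choose m : ℚ) := by
  have h1 := congrArg (fun x : ℕ => (x : ℚ)) (Nat.add_one_mul_choose_eq (2 * m + 1) m)
  have h2 := congrArg (fun x : ℕ => (x : ℚ)) (Nat.add_one_mul_choose_eq (2 * m) m)
  have h3 := congrArg (fun x : ℕ => (x : ℚ)) (Nat.choose_symm_half m)
  push_cast at h1 h2 h3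
  nlinarith [h1, h2, h3]

theorem stmt_17 (n : ℕ) (hn : 2 ≤ n) :
    ∑ k ∈ Finset.range (n + 1), (n.choose k : ℚ) ^ 2 * (k : ℚ) ^ 4 =
    ((2 * n).choose n : ℚ) * (n : ℚ) ^ 3 *
      ((n : ℚ) ^ 3 + (n : ℚ) ^ 2 - 3 * n - 1) /
      (4 * (2 * (n : ℚ) - 1) * (2 * (n : ℚ) - 3)) := by
  obtain ⟨m, rfl⟩ : ∃ m, n = m + 2 := ⟨n - 2, by omega⟩
  clear hn
  -- notation for the three central binomials
  set x2 : ℚ := ((2 * m).choose m : ℚ) with hx2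
  set x1 : ℚ := ((2 * m + 2).choose (m + 1) : ℚ) with hx1
  set x0 : ℚ := ((2 * m + 4).choose (m + 2) : ℚ) with hx0
  -- LHS computation
  have hLHS : ∑ k ∈ Finset.range (m + 2 + 1), ((m + 2).choose k : ℚ) ^ 2 * (k : ℚ) ^ 4
      = ((m : ℚ) + 2) ^ 2 * (((m : ℚ) + 1) ^ 2 * x2 + ((m : ℚ) + 2) * x1) := by
    rw [Finset.sum_range_succ' (fun k => ((m + 2).choose k : ℚ) ^ 2 * (k : ℚ) ^ 4) (m + 2)]
    simp only [Nat.cast_zero, ne_eq, OfNat.ofNat_ne_zero, not_false_eq_true, zero_pow, mul_zero,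
      add_zero]
    have key : ∀ i ∈ range (m + 2),
        ((m + 2).choose (i + 1) : ℚ) ^ 2 * ((i : ℚ) + 1) ^ 4
          = ((m : ℚ) + 2) ^ 2 *
            (((i : ℚ) ^ 2 * ((m + 1).choose i : ℚ) ^ 2)
              + 2 * ((i : ℚ) * ((m + 1).choose i : ℚ) ^ 2)
              + ((m + 1).choose i : ℚ) ^ 2) := by
      intro i _
      have h := lemStep (m + 1) i
      push_cast at h
      have h2 : (((m + 2).choose (i + 1) : ℚ) * ((i : ℚ) + 1)) ^ 2
          = (((m : ℚ) + 2) * ((m + 1).choose i : ℚ)) ^ 2 := by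
        rw [mul_comm (((m + 2).choose (i + 1) : ℚ)) _]
        rw [show ((m : ℚ) + 1 + 1) = (m : ℚ) + 2 by ring] at h
        rw [h]
      nlinarith [h2]
    calc ∑ i ∈ range (m + 2), (((m + 2).choose (i + 1) : ℕ) : ℚ) ^ 2 * (((i : ℕ) + 1 : ℕ) : ℚ) ^ 4
        = ∑ i ∈ range (m + 2), ((m : ℚ) + 2) ^ 2 *
            (((i : ℚ) ^ 2 * ((m + 1).choose i : ℚ) ^ 2)
              + 2 * ((i : ℚ) * ((m + 1).choose i : ℚ) ^ 2)
              + ((m + 1).choose i : ℚ) ^ 2) := by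
          refine Finset.sum_congr rfl fun i hi => ?_
          push_cast
          exact key i hi
      _ = ((m : ℚ) + 2) ^ 2 * (((m : ℚ) + 1) ^ 2 * x2 + ((m : ℚ) + 2) * x1) := by
          rw [← Finset.mul_sum]
          congr 1
          rw [Finset.sum_add_distrib, Finset.sum_add_distrib, ← Finset.mul_sum]
          have hA := congrArg (fun x : ℕ => (x : ℚ)) (lemA (m + 1))
          push_cast at hA
          have hA' : ∑ i ∈ range (m + 2), ((m + 1).choose i : ℚ) ^ 2 = x1 := by
            rw [hx1]
            rw [show 2 * m + 2 = 2 * (m + 1) by ring]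
            convert hA using 2
          have hB := lemB (m + 1)
          have hB' : ∑ i ∈ range (m + 2), (i : ℚ) * ((m + 1).choose i : ℚ) ^ 2
              = ((m : ℚ) + 1) * x1 / 2 := by
            rw [hx1, show 2 * m + 2 = 2 * (m + 1) by ring]
            push_cast at hB ⊢
            convert hB using 2
          have hC := lemC m
          rw [hC, hA', hB']
          ring
  rw [hLHS]
  -- RHS: rewrite the binomial
  have hx0' : ((2 * (m + 2)).choose (m + 2) : ℚ) = x0 := by
    rw [hx0, show 2 * (m + 2) = 2 * m + 4 by ring]
  rw [hx0']
  -- relations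
  have hI1 := lemI m
  have hI2 := lemI (m + 1)
  rw [show 2 * (m + 1) + 2 = 2 * m + 4 by ring, show (m + 1) + 1 = m + 2 by ring,
    show 2 * (m + 1) = 2 * m + 2 by ring] at hI2
  push_cast at hI1 hI2
  have hD : (4 : ℚ) * (2 * ((m : ℚ) + 2) - 1) * (2 * ((m : ℚ) + 2) - 3) ≠ 0 := by
    have hm : (0 : ℚ) ≤ (m : ℚ) := Nat.cast_nonneg m
    have h1 : (2 * ((m : ℚ) + 2) - 1) > 0 := by linarith
    have h2 : (2 * ((m : ℚ) + 2) - 3) > 0 := by linarith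
    have : (4 : ℚ) * (2 * ((m : ℚ) + 2) - 1) * (2 * ((m : ℚ) + 2) - 3) > 0 := by
      have := mul_pos (mul_pos (by norm_num : (0:ℚ) < 4) h1) h2
      linarith
    exact ne_of_gt this
  push_cast
  rw [eq_div_iff hD]
  linear_combination (-2 * ((m : ℚ) + 2) ^ 2 * (2 * (m : ℚ) + 3) * ((m : ℚ) + 1)) * hI1 +
    (-((m : ℚ) + 2) * (((m : ℚ) + 2) ^ 3 + ((m : ℚ) + 2) ^ 2 - 3 * ((m : ℚ) + 2) - 1)) * hI2
end

section
/- For every natural number n ≥ 3, the sum over k from 0 to n of C(n,k)^2·k^6 equals C(2n,n)·n^3·(n^6 + 3n^5 - 13n^4 - 15n^3 + 30n^2 + 8n - 2)/(8(2n-1)(2n-3)(2n-5)), as an identity of rational numbers. -/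
open Finset
open Nat
open Finset

-- cast of descFactorial as a product over ℚ
lemma cast_descFact (k j : ℕ) :
    (k.descFactorial j : ℚ) = ∏ i ∈ range j, ((k : ℚ) - i) := by
  induction j with
  | zero => simp
  | succ j ih =>
    rcases le_or_gt j k with h | h
    · rw [Nat.descFactorial_succ, prod_range_succ, ← ih, Nat.cast_mul, Nat.cast_sub h]
      ring
    · rw [Nat.descFactorial_eq_zero_iff_lt.2 (by omega), prod_range_succ, ← ih,
        Nat.descFactorial_eq_zero_iff_lt.2 h]
      simp

lemma key (n j : ℕ) :
    ∑ k ∈ range (n + 1), n.choose k * n.choose k * k.descFactorial j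
      = n.descFactorial j * (2 * n - j).choose n := by
  rcases le_or_gt j n with hj | hj
  · rw [range_eq_Ico, ← Finset.sum_Ico_consecutive _ (Nat.zero_le j) (by omega : j ≤ n + 1)]
    have h0 : ∑ k ∈ Ico 0 j, n.choose k * n.choose k * k.descFactorial j = 0 := by
      apply Finset.sum_eq_zero
      intro k hk
      rw [Nat.descFactorial_eq_zero_iff_lt.2 (by simp at hk; omega), Nat.mul_zero]
    rw [h0, Finset.sum_Ico_eq_sum_range, zero_add]
    have h1 : ∀ i ∈ range (n + 1 - j),
        n.choose (j + i) * n.choose (j + i) * (j + i).descFactorial j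
          = n.descFactorial j * (n.choose (j + i) * (n - j).choose i) := by
      intro i hi
      simp only [mem_range] at hi
      rw [Nat.descFactorial_eq_factorial_mul_choose,
        Nat.descFactorial_eq_factorial_mul_choose]
      have hc := Nat.choose_mul (n := n) (show j ≤ j + i by omega)
      rw [Nat.add_sub_cancel_left] at hc
      calc n.choose (j + i) * n.choose (j + i) * (Nat.factorial j * (j + i).choose j)
          = Nat.factorial j * (n.choose (j + i) * (j + i).choose j) * n.choose (j + i) := by ring
        _ = Nat.factorial j * (n.choose j * (n - j).choose i) * n.choose (j + i) := by rw [hc]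
        _ = Nat.factorial j * n.choose j * (n.choose (j + i) * (n - j).choose i) := by ring
    rw [Finset.sum_congr rfl h1, ← Finset.mul_sum]
    congr 1
    have hv := Nat.add_choose_eq n (n - j) (n - j)
    rw [Finset.Nat.sum_antidiagonal_eq_sum_range_succ_mk] at hv
    have hnj : n + (n - j) = 2 * n - j := by omega
    have hse : (2 * n - j).choose n = (2 * n - j).choose (n - j) := by
      rw [← Nat.choose_symm (show n ≤ 2 * n - j by omega)]
      congr 1; omega
    rw [hse, ← hnj, hv]
    have hr : n + 1 - j = n - j + 1 := by omega
    rw [hr, ← Finset.sum_range_reflect]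
    apply Finset.sum_congr rfl
    intro i hi
    simp only [mem_range] at hi
    have e1 : n - j + 1 - 1 - i = n - j - i := by omega
    have e2 : j + (n - j - i) = n - i := by omega
    simp only [e1, e2]
    rw [Nat.choose_symm (show i ≤ n by omega)]
  · have h0 : ∑ k ∈ range (n + 1), n.choose k * n.choose k * k.descFactorial j = 0 := by
      apply Finset.sum_eq_zero
      intro k hk
      rw [Nat.descFactorial_eq_zero_iff_lt.2 (by simp at hk; omega), Nat.mul_zero]
    rw [h0, Nat.descFactorial_eq_zero_iff_lt.2 hj, Nat.zero_mul]

lemma qkey (n j : ℕ) :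
    ∑ k ∈ range (n + 1), (n.choose k : ℚ) ^ 2 * (k.descFactorial j : ℚ)
      = (n.descFactorial j : ℚ) * ((2 * n - j).choose n : ℚ) := by
  calc ∑ k ∈ range (n + 1), (n.choose k : ℚ) ^ 2 * (k.descFactorial j : ℚ)
      = ((∑ k ∈ range (n + 1), n.choose k * n.choose k * k.descFactorial j : ℕ) : ℚ) := by
        push_cast
        exact Finset.sum_congr rfl fun k _ => by ring
    _ = _ := by rw [key n j]; push_cast; ring

lemma pow6 (k : ℕ) :
    (k : ℚ) ^ 6 = (k.descFactorial 1 : ℚ) + 31 * (k.descFactorial 2 : ℚ)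
      + 90 * (k.descFactorial 3 : ℚ) + 65 * (k.descFactorial 4 : ℚ)
      + 15 * (k.descFactorial 5 : ℚ) + (k.descFactorial 6 : ℚ) := by
  simp only [cast_descFact, prod_range_succ, prod_range_zero, one_mul]
  push_cast
  ring

lemma stepQ (n a b : ℕ) (hb : b + 1 ≤ n) (ha : a = b + 1) :
    ((2 * n - a).choose (n - a) : ℚ)
      = ((2 * n - b).choose (n - b) : ℚ) * ((n : ℚ) - b) / (2 * (n : ℚ) - b) := by
  subst ha
  have hnat : (2 * n - b) * (2 * n - (b + 1)).choose (n - (b + 1))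
      = (2 * n - b).choose (n - b) * (n - b) := by
    have h1 : 2 * n - b = (2 * n - (b + 1)) + 1 := by omega
    have h2 : n - b = (n - (b + 1)) + 1 := by omega
    rw [h1, h2]
    exact Nat.add_one_mul_choose_eq _ _
  have hd : (2 * (n : ℚ) - b) ≠ 0 := by
    have : (b : ℚ) + 1 ≤ n := by exact_mod_cast hb
    nlinarith
  rw [eq_div_iff hd]
  have e := congrArg (Nat.cast : ℕ → ℚ) hnat
  push_cast [Nat.cast_sub (show b ≤ 2 * n by omega), Nat.cast_sub (show b ≤ n by omega)] at e
  linarith [e]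

theorem stmt_18 (n : ℕ) (hn : 3 ≤ n) :
    ∑ k ∈ Finset.range (n + 1), (n.choose k : ℚ) ^ 2 * (k : ℚ) ^ 6 =
    ((2 * n).choose n : ℚ) * (n : ℚ) ^ 3 *
      ((n : ℚ) ^ 6 + 3 * (n : ℚ) ^ 5 - 13 * (n : ℚ) ^ 4 - 15 * (n : ℚ) ^ 3 +
        30 * (n : ℚ) ^ 2 + 8 * n - 2) /
      (8 * (2 * (n : ℚ) - 1) * (2 * (n : ℚ) - 3) * (2 * (n : ℚ) - 5)) := by
  rcases lt_or_ge n 6 with h6 | h6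
  · interval_cases n <;> norm_num [Finset.sum_range_succ, Nat.choose]
  · have hn6 : (6 : ℚ) ≤ (n : ℚ) := by exact_mod_cast h6
    have expand : ∑ k ∈ Finset.range (n + 1), (n.choose k : ℚ) ^ 2 * (k : ℚ) ^ 6
        = (∑ k ∈ range (n + 1), (n.choose k : ℚ) ^ 2 * (k.descFactorial 1 : ℚ))
          + 31 * (∑ k ∈ range (n + 1), (n.choose k : ℚ) ^ 2 * (k.descFactorial 2 : ℚ))
          + 90 * (∑ k ∈ range (n + 1), (n.choose k : ℚ) ^ 2 * (k.descFactorial 3 : ℚ))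
          + 65 * (∑ k ∈ range (n + 1), (n.choose k : ℚ) ^ 2 * (k.descFactorial 4 : ℚ))
          + 15 * (∑ k ∈ range (n + 1), (n.choose k : ℚ) ^ 2 * (k.descFactorial 5 : ℚ))
          + (∑ k ∈ range (n + 1), (n.choose k : ℚ) ^ 2 * (k.descFactorial 6 : ℚ)) := by
      rw [Finset.mul_sum, Finset.mul_sum, Finset.mul_sum, Finset.mul_sum,
        ← Finset.sum_add_distrib, ← Finset.sum_add_distrib, ← Finset.sum_add_distrib,
        ← Finset.sum_add_distrib, ← Finset.sum_add_distrib]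
      exact Finset.sum_congr rfl fun k _ => by rw [pow6 k]; ring
    rw [expand, qkey, qkey, qkey, qkey, qkey, qkey]
    have csym : ∀ j : ℕ, j ≤ n → ((2 * n - j).choose n : ℚ) = ((2 * n - j).choose (n - j) : ℚ) := by
      intro j hj
      congr 1
      rw [← Nat.choose_symm (show n ≤ 2 * n - j by omega)]
      congr 1
      omega
    rw [csym 1 (by omega), csym 2 (by omega), csym 3 (by omega), csym 4 (by omega),
      csym 5 (by omega), csym 6 (by omega)]
    rw [stepQ n 6 5 (by omega) rfl, stepQ n 5 4 (by omega) rfl, stepQ n 4 3 (by omega) rfl,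
      stepQ n 3 2 (by omega) rfl, stepQ n 2 1 (by omega) rfl, stepQ n 1 0 (by omega) rfl]
    simp only [Nat.sub_zero, Nat.cast_zero, sub_zero, cast_descFact, prod_range_succ,
      prod_range_zero, one_mul]
    push_cast
    have d0 : 2 * (n : ℚ) ≠ 0 := by nlinarith
    have d1 : 2 * (n : ℚ) - 1 ≠ 0 := by nlinarith
    have d2 : 2 * (n : ℚ) - 2 ≠ 0 := by nlinarith
    have d3 : 2 * (n : ℚ) - 3 ≠ 0 := by nlinarith
    have d4 : 2 * (n : ℚ) - 4 ≠ 0 := by nlinarith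
    have d5 : 2 * (n : ℚ) - 5 ≠ 0 := by nlinarith
    have d1' : (n : ℚ) * 2 - 1 ≠ 0 := by nlinarith
    have d3' : (n : ℚ) * 2 - 3 ≠ 0 := by nlinarith
    have d4' : (n : ℚ) * 2 - 4 ≠ 0 := by nlinarith
    have d5' : (n : ℚ) * 2 - 5 ≠ 0 := by nlinarith
    field_simp
    ring
end

section
/- For natural numbers n and m with m ≤ n, the sum over k from 0 to n of C(n,k)^2 · (falling factorial k·(k-1)···(k-m+1)) equals C(2n,n) · Π_{j=0}^{m-1} (n-j)^2/(2n-j), as an identity of rational numbers (with 2n ≥ m ensuring nonzero denominators when n ≥ 1; for n = 0 both sides are interpreted with empty products when m = 0). -/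
open Finset

lemma prod_cast_desc (k m : ℕ) :
    ∏ j ∈ Finset.range m, ((k : ℚ) - j) = (k.descFactorial m : ℚ) := by
  induction m with
  | zero => simp
  | succ m ih =>
    rw [Finset.prod_range_succ, ih, Nat.descFactorial_succ]
    rcases le_or_gt m k with h | h
    · push_cast [h]
      ring
    · rw [Nat.descFactorial_eq_zero_iff_lt.mpr h]
      simp

lemma lemA_s19 (n m : ℕ) (hm : m ≤ n) :
    ∑ k ∈ Finset.range (n + 1), (n.choose k) ^ 2 * k.descFactorial m
      = n.descFactorial m * (2 * n - m).choose (n - m) := by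
  have h1 : range (n+1) = range m ∪ Ico m (n+1) := by
    rw [range_eq_Ico, range_eq_Ico, Finset.Ico_union_Ico_eq_Ico (Nat.zero_le m) (by omega)]
  rw [h1, Finset.sum_union (by
    simp [Finset.disjoint_left]; omega)]
  have h2 : ∑ k ∈ range m, (n.choose k) ^ 2 * k.descFactorial m = 0 := by
    apply Finset.sum_eq_zero
    intro k hk
    simp only [mem_range] at hk
    rw [Nat.descFactorial_eq_zero_iff_lt.mpr hk, mul_zero]
  rw [h2, zero_add, Finset.sum_Ico_eq_sum_range]
  have hN : n + 1 - m = (n - m) + 1 := by omega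
  rw [hN]
  have hterm : ∀ i ∈ range (n - m + 1),
      (n.choose (m + i)) ^ 2 * (m + i).descFactorial m
        = n.descFactorial m * (n.choose ((n - m) - i) * (n - m).choose i) := by
    intro i hi
    simp only [mem_range] at hi
    have hmi : m + i ≤ n := by omega
    rw [Nat.descFactorial_eq_factorial_mul_choose, sq,
      Nat.descFactorial_eq_factorial_mul_choose]
    have hsymm : n.choose (m + i) = n.choose (n - m - i) := by
      rw [← Nat.choose_symm hmi]
      congr 1
      omega
    have : n.choose (m+i) * (m+i).choose m = n.choose m * (n - m).choose i := by
      rw [Nat.choose_mul (Nat.le_add_right m i), Nat.add_sub_cancel_left]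
    calc n.choose (m+i) * n.choose (m+i) * ((Nat.factorial m) * (m+i).choose m)
        = (n.choose (m+i) * (m+i).choose m) * (Nat.factorial m) * n.choose (m+i) := by ring
      _ = (n.choose m * (n - m).choose i) * (Nat.factorial m) * n.choose (n - m - i) := by
          rw [this, hsymm]
      _ = (Nat.factorial m) * n.choose m * (n.choose (n - m - i) * (n - m).choose i) := by ring
  rw [Finset.sum_congr rfl hterm, ← Finset.mul_sum]
  congr 1
  rw [← Finset.sum_range_reflect]
  have : ∀ i ∈ range (n - m + 1),
      n.choose (n - m - (n - m + 1 - 1 - i)) * (n - m).choose (n - m + 1 - 1 - i)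
        = n.choose i * (n - m).choose (n - m - i) := by
    intro i hi
    simp only [mem_range] at hi
    congr 2 <;> omega
  rw [Finset.sum_congr rfl this]
  have hv := Nat.add_choose_eq n (n - m) (n - m)
  rw [Finset.Nat.sum_antidiagonal_eq_sum_range_succ_mk] at hv
  rw [← hv]
  congr 1
  omega

lemma lemB_s19 (n m : ℕ) (hm : m ≤ n) :
    (2 * n - m).choose (n - m) * (2 * n).descFactorial m
      = (2 * n).choose n * n.descFactorial m := by
  have key : (2*n - m).choose (n - m) * (Nat.factorial (n-m) * Nat.factorial n) = Nat.factorial (2*n-m) := by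
    have h1 : n - m ≤ 2*n - m := by omega
    have h2 : (2*n - m) - (n - m) = n := by omega
    have := Nat.choose_mul_factorial_mul_factorial h1
    rw [h2] at this
    rw [← this]; ring
  have key2 : (2*n).choose n * (Nat.factorial n * Nat.factorial n) = Nat.factorial (2*n) := by
    have := Nat.choose_mul_factorial_mul_factorial (show n ≤ 2*n by omega)
    rw [show 2*n - n = n by omega] at this
    rw [← this]; ring
  have d1 : Nat.factorial (2*n-m) * (2*n).descFactorial m = Nat.factorial (2*n) :=
    Nat.factorial_mul_descFactorial (by omega)
  have d2 : Nat.factorial (n-m) * n.descFactorial m = Nat.factorial n :=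
    Nat.factorial_mul_descFactorial hm
  have hpos : 0 < Nat.factorial (n-m) * Nat.factorial n := Nat.mul_pos (Nat.factorial_pos _) (Nat.factorial_pos _)
  apply Nat.eq_of_mul_eq_mul_right hpos
  calc (2*n - m).choose (n - m) * (2*n).descFactorial m * (Nat.factorial (n-m) * Nat.factorial n)
      = ((2*n - m).choose (n - m) * (Nat.factorial (n-m) * Nat.factorial n)) * (2*n).descFactorial m := by ring
    _ = Nat.factorial (2*n-m) * (2*n).descFactorial m := by rw [key]
    _ = Nat.factorial (2*n) := d1
    _ = (2*n).choose n * (Nat.factorial n * Nat.factorial n) := key2.symm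
    _ = (2*n).choose n * ((Nat.factorial (n-m) * n.descFactorial m) * Nat.factorial n) := by rw [d2]
    _ = (2*n).choose n * n.descFactorial m * (Nat.factorial (n-m) * Nat.factorial n) := by ring

theorem stmt_19 (n m : ℕ) (hm : m ≤ n) :
    ∑ k ∈ Finset.range (n + 1),
      (n.choose k : ℚ) ^ 2 * ∏ j ∈ Finset.range m, ((k : ℚ) - j) =
    ((2 * n).choose n : ℚ) *
      ∏ j ∈ Finset.range m, ((n : ℚ) - j) ^ 2 / (2 * (n : ℚ) - j) := by
  have hL : ∀ k ∈ Finset.range (n+1),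
      (n.choose k : ℚ) ^ 2 * ∏ j ∈ Finset.range m, ((k : ℚ) - j)
        = (((n.choose k) ^ 2 * k.descFactorial m : ℕ) : ℚ) := by
    intro k _
    rw [prod_cast_desc]
    push_cast
    ring
  rw [Finset.sum_congr rfl hL, ← Nat.cast_sum, lemA_s19 n m hm]
  have hR : ∏ j ∈ Finset.range m, ((n : ℚ) - j) ^ 2 / (2 * (n : ℚ) - j)
      = (n.descFactorial m : ℚ)^2 / ((2*n).descFactorial m : ℚ) := by
    rw [Finset.prod_div_distrib, Finset.prod_pow, prod_cast_desc]
    congr 1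
    have := prod_cast_desc (2*n) m
    push_cast at this ⊢
    rw [← this]
  rw [hR]
  have hd : ((2*n).descFactorial m : ℚ) ≠ 0 := by
    simp only [ne_eq, Nat.cast_eq_zero, Nat.descFactorial_eq_zero_iff_lt]
    omega
  rw [mul_div_assoc' ((2 * n).choose n : ℚ), eq_div_iff hd]
  have : ((2 * n - m).choose (n - m) * (2 * n).descFactorial m : ℕ)
      = ((2 * n).choose n * n.descFactorial m : ℕ) := lemB_s19 n m hm
  have h2 : ((2*n-m).choose (n-m) : ℚ) * ((2*n).descFactorial m : ℚ)
      = ((2*n).choose n : ℚ) * (n.descFactorial m : ℚ) := by exact_mod_cast this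
  push_cast
  linear_combination (n.descFactorial m : ℚ) * h2
end
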